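/- Let R̄ be a ℤ-graded ring and let M, M' be graded R̄-modules which are isomorphic as ungraded R̄-modules, and suppose the endomorphism ring End_R(M) of the underlying ungraded module is local. Then there exist an integer j and an isomorphism of graded R̄-modules M' ≅ M{j}, where M{j} denotes M with grading shifted by j (M{j}^i = M^{i+j}). -/

import Mathlib

open DirectSum

section Aux

variable {M : Type*} [AddCommGroup M] (ℳ : ℤ → AddSubgroup M) [DirectSum.Decomposition ℳ]

/-- Projection onto the `n`-th graded piece, as an `AddMonoidHom`. -/
noncomputable def gradedProj (n : ℤ) : M →+ M where
  toFun x := (DirectSum.decompose ℳ x n : M)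
  map_zero' := by simp
  map_add' x y := by simp [DirectSum.decompose_add]

lemma gradedProj_apply (n : ℤ) (x : M) :
    gradedProj ℳ n x = (DirectSum.decompose ℳ x n : M) := rfl

lemma gradedProj_mem (n : ℤ) (x : M) : gradedProj ℳ n x ∈ ℳ n :=
  (DirectSum.decompose ℳ x n).2

lemma gradedProj_of_mem_same {n : ℤ} {x : M} (hx : x ∈ ℳ n) : gradedProj ℳ n x = x := by
  rw [gradedProj_apply, DirectSum.decompose_of_mem_same ℳ hx]

lemma gradedProj_of_mem_ne {m n : ℤ} {x : M} (hx : x ∈ ℳ m) (h : m ≠ n) :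
    gradedProj ℳ n x = 0 := by
  rw [gradedProj_apply, DirectSum.decompose_of_mem_ne ℳ hx h]

lemma exists_finset_gradedProj_sum (x : M) :
    ∃ S : Finset ℤ, ∀ T : Finset ℤ, S ⊆ T → ∑ n ∈ T, gradedProj ℳ n x = x := by
  refine DirectSum.Decomposition.inductionOn ℳ
    (motive := fun x => ∃ S : Finset ℤ, ∀ T : Finset ℤ, S ⊆ T → ∑ n ∈ T, gradedProj ℳ n x = x)
    ?_ ?_ ?_ x
  · exact ⟨∅, fun T _ => by simp⟩
  · rintro i ⟨m, hm⟩
    refine ⟨{i}, fun T hT => ?_⟩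
    rw [Finset.sum_eq_single i (fun n _ hn => gradedProj_of_mem_ne ℳ hm (Ne.symm hn))
      (fun h => absurd (hT (Finset.mem_singleton_self i)) h)]
    exact gradedProj_of_mem_same ℳ hm
  · rintro a b ⟨Sa, ha⟩ ⟨Sb, hb⟩
    refine ⟨Sa ∪ Sb, fun T hT => ?_⟩
    simp only [map_add, Finset.sum_add_distrib]
    rw [ha T (Finset.subset_union_left.trans hT), hb T (Finset.subset_union_right.trans hT)]

lemma gradedProj_smul {R : Type*} [Ring R] [Module R M] (𝒜 : ℤ → AddSubgroup R)
    (hM : ∀ (i j : ℤ), ∀ r ∈ 𝒜 i, ∀ x ∈ ℳ j, r • x ∈ ℳ (i + j))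
    {d : ℤ} {r : R} (hr : r ∈ 𝒜 d) (n : ℤ) (x : M) :
    gradedProj ℳ (d + n) (r • x) = r • gradedProj ℳ n x := by
  refine DirectSum.Decomposition.inductionOn ℳ
    (motive := fun x => gradedProj ℳ (d + n) (r • x) = r • gradedProj ℳ n x) ?_ ?_ ?_ x
  · simp
  · rintro m ⟨w, hw⟩
    show gradedProj ℳ (d + n) (r • w) = r • gradedProj ℳ n w
    by_cases h : m = n
    · subst h
      rw [gradedProj_of_mem_same ℳ (hM d m r hr w hw), gradedProj_of_mem_same ℳ hw]
    · rw [gradedProj_of_mem_ne ℳ (hM d m r hr w hw) (by omega),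
        gradedProj_of_mem_ne ℳ hw h, smul_zero]
  · intro a b ha hb
    rw [smul_add, map_add, ha, hb, map_add, smul_add]

variable {M' : Type*} [AddCommGroup M'] (ℳ' : ℤ → AddSubgroup M') [DirectSum.Decomposition ℳ']

set_option synthInstance.maxHeartbeats 1000000 in
/-- The degree-`k` component of an additive map between graded abelian groups. -/
noncomputable def gradedComp (f : M →+ M') (k : ℤ) : M →+ M' :=
  (DirectSum.toAddMonoid
      (fun i => ((gradedProj ℳ' (i + k)).comp (f.comp (ℳ i).subtype)))).comp
    (DirectSum.decomposeAddEquiv ℳ).toAddMonoidHom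

set_option synthInstance.maxHeartbeats 1000000 in
lemma gradedComp_of_mem (f : M →+ M') (k : ℤ) {i : ℤ} {x : M} (hx : x ∈ ℳ i) :
    gradedComp ℳ ℳ' f k x = gradedProj ℳ' (i + k) (f x) := by
  show DirectSum.toAddMonoid _ (DirectSum.decomposeAddEquiv ℳ x) = _
  rw [DirectSum.decomposeAddEquiv_apply, DirectSum.decompose_of_mem ℳ hx,
    DirectSum.toAddMonoid_of]
  rfl

lemma exists_finset_gradedComp_sum (f : M →+ M') (x : M) :
    ∃ S : Finset ℤ, ∀ T : Finset ℤ, S ⊆ T → ∑ k ∈ T, gradedComp ℳ ℳ' f k x = f x := by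
  refine DirectSum.Decomposition.inductionOn ℳ
    (motive := fun x => ∃ S : Finset ℤ, ∀ T : Finset ℤ, S ⊆ T →
      ∑ k ∈ T, gradedComp ℳ ℳ' f k x = f x) ?_ ?_ ?_ x
  · exact ⟨∅, fun T _ => by simp⟩
  · rintro i ⟨w, hw⟩
    obtain ⟨S₀, hS₀⟩ := exists_finset_gradedProj_sum ℳ' (f w)
    refine ⟨S₀.image (fun n => n - i), fun T hT => ?_⟩
    have h1 : ∀ k ∈ T, gradedComp ℳ ℳ' f k w = gradedProj ℳ' (i + k) (f w) :=
      fun k _ => gradedComp_of_mem ℳ ℳ' f k hw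
    rw [Finset.sum_congr rfl h1]
    have h2 : ∑ n ∈ T.image (fun k => i + k), gradedProj ℳ' n (f w)
        = ∑ k ∈ T, gradedProj ℳ' (i + k) (f w) :=
      Finset.sum_image (fun a _ b _ h => by omega)
    rw [← h2]
    refine hS₀ _ fun n hn => Finset.mem_image.mpr ⟨n - i, hT (Finset.mem_image_of_mem _ hn), by ring⟩
  · rintro a b ⟨Sa, ha⟩ ⟨Sb, hb⟩
    refine ⟨Sa ∪ Sb, fun T hT => ?_⟩
    simp only [map_add, Finset.sum_add_distrib]
    rw [ha T (Finset.subset_union_left.trans hT), hb T (Finset.subset_union_right.trans hT)]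

lemma gradedComp_smul {R : Type*} [Ring R] [Module R M] [Module R M']
    (𝒜 : ℤ → AddSubgroup R)
    (hM : ∀ (i j : ℤ), ∀ r ∈ 𝒜 i, ∀ x ∈ ℳ j, r • x ∈ ℳ (i + j))
    (hM' : ∀ (i j : ℤ), ∀ r ∈ 𝒜 i, ∀ x ∈ ℳ' j, r • x ∈ ℳ' (i + j))
    [DirectSum.Decomposition 𝒜]
    (f : M →ₗ[R] M') (k : ℤ) (r : R) (x : M) :
    gradedComp ℳ ℳ' f.toAddMonoidHom k (r • x) = r • gradedComp ℳ ℳ' f.toAddMonoidHom k x := by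
  refine DirectSum.Decomposition.inductionOn 𝒜
    (motive := fun r => ∀ x : M, gradedComp ℳ ℳ' f.toAddMonoidHom k (r • x)
      = r • gradedComp ℳ ℳ' f.toAddMonoidHom k x) ?_ ?_ ?_ r x
  · intro x; simp
  · rintro d ⟨r, hr⟩ x
    show gradedComp ℳ ℳ' f.toAddMonoidHom k (r • x)
      = r • gradedComp ℳ ℳ' f.toAddMonoidHom k x
    refine DirectSum.Decomposition.inductionOn ℳ
      (motive := fun x => gradedComp ℳ ℳ' f.toAddMonoidHom k (r • x)
        = r • gradedComp ℳ ℳ' f.toAddMonoidHom k x) ?_ ?_ ?_ x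
    · simp
    · rintro i ⟨w, hw⟩
      show gradedComp ℳ ℳ' f.toAddMonoidHom k (r • w)
        = r • gradedComp ℳ ℳ' f.toAddMonoidHom k w
      have hrw : r • w ∈ ℳ (d + i) := hM d i r hr w hw
      rw [gradedComp_of_mem ℳ ℳ' _ k hrw, gradedComp_of_mem ℳ ℳ' _ k hw]
      have hf : f.toAddMonoidHom (r • w) = r • f.toAddMonoidHom w := f.map_smul r w
      rw [hf, show d + i + k = d + (i + k) by ring]
      exact gradedProj_smul ℳ' 𝒜 hM' hr (i + k) (f w)
    · intro a b ha hb
      rw [smul_add, map_add, ha, hb, map_add, smul_add]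
  · intro a b ha hb x
    rw [add_smul, map_add, ha, hb, add_smul]

end Aux

/-- Uniqueness of graded lifts: let `R` be a `ℤ`-graded ring and `M`, `M'` graded
`R`-modules which are isomorphic as ungraded `R`-modules.  If the endomorphism ring of
the ungraded module `M` is local, then `M' ≅ M{j}` as graded `R`-modules for some shift
`j` (where `M{j}^i = M^{i+j}`). -/
theorem stmt17 {R M M' : Type*} [Ring R] [AddCommGroup M] [Module R M]
    [AddCommGroup M'] [Module R M']
    (𝒜 : ℤ → AddSubgroup R) [GradedRing 𝒜]
    (ℳ : ℤ → AddSubgroup M) [DirectSum.Decomposition ℳ]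
    (ℳ' : ℤ → AddSubgroup M') [DirectSum.Decomposition ℳ']
    (hM : ∀ (i j : ℤ), ∀ r ∈ 𝒜 i, ∀ x ∈ ℳ j, r • x ∈ ℳ (i + j))
    (hM' : ∀ (i j : ℤ), ∀ r ∈ 𝒜 i, ∀ x ∈ ℳ' j, r • x ∈ ℳ' (i + j))
    (hiso : Nonempty (M ≃ₗ[R] M'))
    (hlocal : IsLocalRing (Module.End R M)) :
    ∃ (j : ℤ) (g : M ≃ₗ[R] M'), ∀ (i : ℤ) (x : M), x ∈ ℳ (i + j) ↔ g x ∈ ℳ' i := by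
  obtain ⟨f⟩ := hiso
  haveI := hlocal
  set F : ℤ → (M →ₗ[R] M') := fun k =>
    { toFun := gradedComp ℳ ℳ' f.toLinearMap.toAddMonoidHom k
      map_add' := fun a b => map_add _ a b
      map_smul' := fun r x => gradedComp_smul ℳ ℳ' 𝒜 hM hM' f.toLinearMap k r x } with hF
  set h : ℤ → Module.End R M := fun k => (f.symm : M' →ₗ[R] M) ∘ₗ F k with hh
  have hFapp : ∀ k x, F k x = gradedComp ℳ ℳ' f.toLinearMap.toAddMonoidHom k x :=
    fun _ _ => rfl
  have hex : ∃ k, IsUnit (h k) := by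
    by_contra hex
    push_neg at hex
    have hz : ∀ x : M, x = 0 := by
      intro x
      obtain ⟨S, hS⟩ := exists_finset_gradedComp_sum ℳ ℳ' f.toLinearMap.toAddMonoidHom x
      have hsum : (∑ k ∈ S, h k) x = x := by
        rw [LinearMap.sum_apply]
        have h1 : ∑ k ∈ S, h k x = f.symm (∑ k ∈ S, F k x) := by
          rw [map_sum]; rfl
        have h2 : ∑ k ∈ S, F k x = f x := by
          rw [show ∑ k ∈ S, F k x = ∑ k ∈ S, gradedComp ℳ ℳ' f.toLinearMap.toAddMonoidHom k x
            from Finset.sum_congr rfl (fun k _ => hFapp k x)]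
          exact hS S (subset_refl S)
        rw [h1, h2, f.symm_apply_apply]
      have hadd : ∀ a b : Module.End R M, ¬IsUnit a → ¬IsUnit b → ¬IsUnit (a + b) := by
        intro a b ha hb H
        obtain ⟨u, hu⟩ := H
        have h1 : ((u⁻¹ : (Module.End R M)ˣ) : Module.End R M) * a
            + ((u⁻¹ : (Module.End R M)ˣ) : Module.End R M) * b = 1 := by
          rw [← mul_add, ← hu, u.inv_mul]
        rcases IsLocalRing.isUnit_or_isUnit_of_add_one h1 with h2 | h2
        · refine ha ?_
          have h3 := (Units.isUnit u).mul h2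
          rwa [← mul_assoc, u.mul_inv, one_mul] at h3
        · refine hb ?_
          have h3 := (Units.isUnit u).mul h2
          rwa [← mul_assoc, u.mul_inv, one_mul] at h3
      have hnon : ¬ IsUnit (∑ k ∈ S, h k) :=
        Finset.sum_induction h (fun e => ¬IsUnit e) hadd not_isUnit_zero (fun k _ => hex k)
      have hu : IsUnit (1 - ∑ k ∈ S, h k) := by
        by_contra hc
        exact hadd _ _ hnon hc (by rw [add_sub_cancel]; exact isUnit_one)
      have hzero : (1 - ∑ k ∈ S, h k) x = 0 := by
        rw [LinearMap.sub_apply, hsum, Module.End.one_apply, sub_self]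
      obtain ⟨u, hu'⟩ := hu
      have e1 : (((u⁻¹ : (Module.End R M)ˣ) : Module.End R M) * (1 - ∑ k ∈ S, h k)) x = x := by
        rw [← hu', u.inv_mul, Module.End.one_apply]
      rw [Module.End.mul_apply, hzero, map_zero] at e1
      exact e1.symm
    haveI : Subsingleton M := subsingleton_of_forall_eq 0 hz
    haveI : Subsingleton (Module.End R M) := inferInstance
    exact absurd ‹Subsingleton (Module.End R M)› (not_subsingleton _)
  obtain ⟨k₀, hk⟩ := hex
  have hbij : Function.Bijective (F k₀) := by
    have heq : ⇑(F k₀) = ⇑(f.toLinearMap) ∘ ⇑(h k₀) := by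
      funext x
      simp [hh, Function.comp]
    rw [heq]
    exact f.bijective.comp ((Module.End.isUnit_iff (h k₀)).mp hk)
  set g : M ≃ₗ[R] M' := LinearEquiv.ofBijective (F k₀) hbij with hg
  have hgapp : ∀ x, g x = gradedComp ℳ ℳ' f.toLinearMap.toAddMonoidHom k₀ x := fun _ => rfl
  have hgmem : ∀ (m : ℤ) (x : M), x ∈ ℳ m → g x ∈ ℳ' (m + k₀) := by
    intro m x hx
    rw [hgapp, gradedComp_of_mem ℳ ℳ' _ k₀ hx]
    exact gradedProj_mem ℳ' _ _
  have hcommut : ∀ (i : ℤ) (w : M), gradedProj ℳ' i (g w) = g (gradedProj ℳ (i - k₀) w) := by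
    intro i w
    refine DirectSum.Decomposition.inductionOn ℳ
      (motive := fun w => gradedProj ℳ' i (g w) = g (gradedProj ℳ (i - k₀) w)) ?_ ?_ ?_ w
    · simp
    · rintro m ⟨w, hw⟩
      show gradedProj ℳ' i (g w) = g (gradedProj ℳ (i - k₀) w)
      by_cases hmi : m = i - k₀
      · subst hmi
        rw [gradedProj_of_mem_same ℳ hw, gradedProj_of_mem_same ℳ'
          (show g w ∈ ℳ' i by simpa using hgmem _ w hw)]
      · rw [gradedProj_of_mem_ne ℳ hw hmi, map_zero,
          gradedProj_of_mem_ne ℳ' (hgmem m w hw) (by omega)]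
    · intro a b ha hb
      rw [map_add, map_add, map_add, map_add, ha, hb]
  refine ⟨-k₀, g, fun i x => ?_⟩
  constructor
  · intro hx
    have := hgmem (i + -k₀) x hx
    simpa using this
  · intro hgx
    have h1 : g x = g (gradedProj ℳ (i - k₀) x) := by
      rw [← hcommut i x, gradedProj_of_mem_same ℳ' hgx]
    have h2 : x = gradedProj ℳ (i - k₀) x := g.injective h1
    rw [show i + -k₀ = i - k₀ by ring, h2]
    exact gradedProj_mem ℳ _ _
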